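/- arXiv:2203.04105 — 7 statements merged into one kernel-verified Lean document; each statement's English description precedes it below -/
import Mathlib

section
/- Let M be a k×k matrix over a commutative ring, and let n = (n_1,...,n_k) be positive integers with K = n_1+...+n_k. Let W be the K×k block matrix whose (i,j) block is the all-ones column vector of height n_i if i=j and zero otherwise. Then det(W M Wᵀ − 2·Id_K) = (−2)^{K−k} · det(Δ_n M − 2·Id_k), where Δ_n is the diagonal matrix with entries n_1,...,n_k. -/
open Matrix

lemma blowup_aux {S : Type*} [CommRing S] [Invertible (2:S)] {k : ℕ} (n : Fin k → ℕ)
    (hn : ∀ i, 0 < n i) (M : Matrix (Fin k) (Fin k) S)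
    (W : Matrix (Σ i : Fin k, Fin (n i)) (Fin k) S)
    (hW : ∀ p j, W p j = if p.1 = j then 1 else 0) :
    (W * M * W.transpose - (2 : S) • (1 : Matrix (Σ i : Fin k, Fin (n i))
        (Σ i : Fin k, Fin (n i)) S)).det
      = (-2 : S) ^ ((∑ i, n i) - k) *
        (Matrix.diagonal (fun i => (n i : S)) * M - (2 : S) • (1 : Matrix (Fin k) (Fin k) S)).det := by
  set Δ : Matrix (Fin k) (Fin k) S := Matrix.diagonal (fun i => (n i : S)) with hΔ
  have hK : k ≤ ∑ i, n i := by
    calc k = ∑ _i : Fin k, 1 := by simp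
    _ ≤ ∑ i, n i := Finset.sum_le_sum fun i _ => hn i
  have hcard : Fintype.card (Σ i : Fin k, Fin (n i)) = ∑ i, n i := by
    simp [Fintype.card_sigma]
  have hWW : W.transpose * W = Δ := by
    ext i j
    simp only [Matrix.mul_apply, Matrix.transpose_apply, hW]
    rw [← Finset.univ_sigma_univ, Finset.sum_sigma]
    by_cases h : i = j
    · subst h
      simp [hΔ, Matrix.diagonal_apply_eq, Finset.sum_ite_eq', ite_and]
    · simp [hΔ, Matrix.diagonal_apply_ne _ h, h, ite_and, Ne.symm h]
  have key : W * M * W.transpose - (2 : S) • 1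
      = (-2 : S) • (1 + W * ((-(⅟2 : S)) • (M * W.transpose))) := by
    rw [smul_add, Matrix.mul_smul, smul_smul]
    have h2 : (-2 : S) * -(⅟2) = 1 := by
      rw [neg_mul_neg, mul_invOf_self]
    rw [h2, one_smul, ← Matrix.mul_assoc]
    module
  have key2 : Δ * M - (2 : S) • 1 = (-2 : S) • (1 + (-(⅟2 : S)) • (Δ * M)) := by
    rw [smul_add, smul_smul]
    have h2 : (-2 : S) * -(⅟2) = 1 := by
      rw [neg_mul_neg, mul_invOf_self]
    rw [h2, one_smul]
    module
  rw [key, key2, Matrix.det_smul, Matrix.det_smul, Matrix.det_one_add_mul_comm, hcard,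
    Fintype.card_fin]
  have h3 : ((-(⅟2 : S)) • (M * W.transpose)) * W = (-(⅟2 : S)) • (M * Δ) := by
    rw [Matrix.smul_mul, Matrix.mul_assoc, hWW]
  rw [h3]
  have h4 : (1 : Matrix (Fin k) (Fin k) S) + (-(⅟2 : S)) • (M * Δ)
      = 1 + M * ((-(⅟2 : S)) • Δ) := by rw [Matrix.mul_smul]
  rw [h4, Matrix.det_one_add_mul_comm, Matrix.smul_mul]
  rw [← mul_assoc, ← pow_add, Nat.sub_add_cancel hK]

lemma map_expr1 {S T : Type*} [CommRing S] [CommRing T] (f : S →+* T)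
    {m k : Type*} [Fintype k] [Fintype m] [DecidableEq m] (W : Matrix m k S)
    (M : Matrix k k S) :
    ((W * M * W.transpose - (2 : S) • 1).map f)
      = (W.map f) * (M.map f) * (W.map f).transpose - (2 : T) • 1 := by
  have h2 : ((2 : S) • (1 : Matrix m m S)).map f = (2 : T) • 1 := by
    ext i j
    simp [Matrix.map_apply, Matrix.one_apply, apply_ite f, smul_eq_mul, map_ofNat]
  rw [Matrix.map_sub f (fun a b => map_sub f a b), Matrix.map_mul, Matrix.map_mul,
    Matrix.transpose_map, h2]

lemma map_expr2 {S T : Type*} [CommRing S] [CommRing T] (f : S →+* T)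
    {k : Type*} [Fintype k] [DecidableEq k] (A B : Matrix k k S) :
    ((A * B - (2 : S) • 1).map f) = (A.map f) * (B.map f) - (2 : T) • 1 := by
  have h2 : ((2 : S) • (1 : Matrix k k S)).map f = (2 : T) • 1 := by
    ext i j
    simp [Matrix.map_apply, Matrix.one_apply, apply_ite f, smul_eq_mul, map_ofNat]
  rw [Matrix.map_sub f (fun a b => map_sub f a b), Matrix.map_mul, h2]

set_option maxHeartbeats 1000000 in
set_option synthInstance.maxHeartbeats 200000 in
/-- For a k×k matrix `M` over a commutative ring and positive integers
`n = (n_1, …, n_k)` with `K = ∑ n_i`, letting `W` be the K×k block matrix whose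
i-th block is the all-ones column of height `n_i` in column `i`,
`det (W M Wᵀ − 2·Id_K) = (−2)^(K−k) · det (Δ_n M − 2·Id_k)`. -/
theorem blowup_det_formula (R : Type*) [CommRing R] (k : ℕ) (n : Fin k → ℕ)
    (hn : ∀ i, 0 < n i) (M : Matrix (Fin k) (Fin k) R)
    (W : Matrix (Σ i : Fin k, Fin (n i)) (Fin k) R)
    (hW : ∀ p j, W p j = if p.1 = j then 1 else 0) :
    (W * M * W.transpose - (2 : R) • (1 : Matrix (Σ i : Fin k, Fin (n i))
        (Σ i : Fin k, Fin (n i)) R)).det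
      = (-2 : R) ^ ((∑ i, n i) - k) *
        (Matrix.diagonal (fun i => (n i : R)) * M - (2 : R) • (1 : Matrix (Fin k) (Fin k) R)).det := by
  classical
  set S₀ := MvPolynomial (Fin k × Fin k) ℤ with hS₀
  let F := FractionRing S₀
  haveI : Invertible (2 : F) := invertibleOfNonzero two_ne_zero
  set N : Matrix (Fin k) (Fin k) S₀ := Matrix.of fun i j => MvPolynomial.X (i, j) with hN
  set W₀ : Matrix (Σ i : Fin k, Fin (n i)) (Fin k) S₀ :=
    Matrix.of fun p j => if p.1 = j then 1 else 0 with hW₀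
  let φ : S₀ →+* F := algebraMap S₀ F
  -- the identity over the fraction field
  have hF := blowup_aux (S := F) n hn (N.map φ) (W₀.map φ)
    (by intro p j; simp [hW₀, Matrix.map_apply, apply_ite φ])
  -- rewrite both sides as images under φ
  have hΔmap : (Matrix.diagonal (fun i => (n i : S₀))).map φ
      = Matrix.diagonal (fun i => (n i : F)) := by
    rw [Matrix.diagonal_map (map_zero φ)]
    simp
  have hdetφ : ∀ {m : Type} [Fintype m] [DecidableEq m] (A : Matrix m m S₀),
      (A.map ⇑φ).det = φ A.det := by
    intro m _ _ A
    rw [RingHom.map_det]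
    rfl
  rw [← map_expr1 φ W₀ N, hdetφ, ← hΔmap, ← map_expr2 φ _ N, hdetφ] at hF
  have hF' : φ ((W₀ * N * W₀.transpose - (2 : S₀) • 1).det)
      = φ ((-2 : S₀) ^ ((∑ i, n i) - k)
          * (Matrix.diagonal (fun i => (n i : S₀)) * N - (2 : S₀) • 1).det) := by
    rw [_root_.map_mul, map_pow, map_neg, map_ofNat]
    exact hF
  have E₀ := IsFractionRing.injective S₀ F hF'
  -- push to R
  let ψ : S₀ →+* R := (MvPolynomial.aeval fun p : Fin k × Fin k => M p.1 p.2).toRingHom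
  have := congrArg ψ E₀
  have hdetψ : ∀ {m : Type} [Fintype m] [DecidableEq m] (A : Matrix m m S₀),
      ψ A.det = (A.map ⇑ψ).det := by
    intro m _ _ A
    rw [RingHom.map_det]
    rfl
  rw [_root_.map_mul, map_pow, map_neg, map_ofNat, hdetψ, hdetψ, map_expr1, map_expr2] at this
  have hNψ : N.map ψ = M := by
    ext i j
    show (MvPolynomial.aeval fun p : Fin k × Fin k => M p.1 p.2) (MvPolynomial.X (i, j)) = M i j
    exact MvPolynomial.aeval_X _ (i, j)
  have hWψ : W₀.map ψ = W := by
    ext p j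
    simp [hW₀, Matrix.map_apply, hW, apply_ite ψ]
  have hΔψ : (Matrix.diagonal (fun i => (n i : S₀))).map ψ
      = Matrix.diagonal (fun i => (n i : R)) := by
    rw [Matrix.diagonal_map (map_zero ψ)]
    simp
  rw [hNψ, hWψ, hΔψ] at this
  exact this
end

section
/- For the complete graph K_k, the polynomial p_{K_k}(n_1,...,n_k) = det(Δ_n M_{K_k} − 2·Id_k) equals ∏_{i=1}^k (n_i − 2) + Σ_{i=1}^k n_i ∏_{i'≠i} (n_{i'} − 2). -/
open MvPolynomial Finset

/-- Auxiliary: determinant of a diagonal matrix plus a rank-one "constant rows" matrix. -/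
theorem det_diag_add_const_rows {R : Type*} [CommRing R] {n : ℕ} (d u : Fin n → R) :
    Matrix.det (Matrix.of fun i j : Fin n => (if i = j then d i else 0) + u i)
      = ∏ i : Fin n, d i + ∑ i : Fin n, u i * ∏ j ∈ univ.erase i, d j := by
  classical
  set f := (Matrix.detRowAlternating : (Fin n → R) [⋀^Fin n]→ₗ[R] R) with hf
  set m : Fin n → Fin n → R := fun i => d i • (Pi.single i (1 : R) : Fin n → R) with hm
  set m' : Fin n → Fin n → R := fun i _ => u i with hm'
  have hMat : (Matrix.of fun i j : Fin n => (if i = j then d i else 0) + u i) = m + m' := by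
    ext i j
    by_cases h : i = j
    · subst h
      simp [hm, hm', Pi.single_apply]
    · simp [hm, hm', Pi.single_apply, h, Ne.symm h]
  have hdet : Matrix.det (Matrix.of fun i j : Fin n => (if i = j then d i else 0) + u i)
      = f (m + m') := by rw [hMat]; rfl
  rw [hdet]
  have hadd := f.toMultilinearMap.map_add_univ m m'
  have hcoe : ∀ v : Fin n → Fin n → R, f.toMultilinearMap v = f v := fun _ => rfl
  rw [hcoe] at hadd
  rw [hadd]
  -- key claim giving the value of every summand
  have key : ∀ s : Finset (Fin n),
      f (s.piecewise m m')
        = (if s = univ then ∏ i : Fin n, d i else 0)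
          + ∑ i : Fin n, (if s = univ.erase i then u i * ∏ j ∈ univ.erase i, d j else 0) := by
    intro s
    -- scalar/direction decomposition of the rows
    have hpw : s.piecewise m m'
        = fun i => (if i ∈ s then d i else u i) •
            (if i ∈ s then (Pi.single i (1 : R) : Fin n → R) else fun _ => (1 : R)) := by
      funext i
      by_cases hi : i ∈ s
      · simp [Finset.piecewise, hi, hm, hm']
      · funext j
        simp [Finset.piecewise, hi, hm, hm']
    have hsmul : f (s.piecewise m m')
        = (∏ i : Fin n, (if i ∈ s then d i else u i)) *
          f (fun i => (if i ∈ s then (Pi.single i (1 : R) : Fin n → R) else fun _ => (1 : R))) := by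
      rw [hpw]
      have := f.toMultilinearMap.map_smul_univ (fun i => if i ∈ s then d i else u i)
        (fun i => (if i ∈ s then (Pi.single i (1 : R) : Fin n → R) else fun _ => (1 : R)))
      rw [hcoe, hcoe] at this
      rw [this, smul_eq_mul]
    by_cases hsu : s = univ
    · subst hsu
      have hg : (fun i => (if i ∈ (univ : Finset (Fin n)) then (Pi.single i (1 : R) : Fin n → R)
          else fun _ => (1 : R))) = fun i j => (1 : Matrix (Fin n) (Fin n) R) i j := by
        funext i j
        simp [Matrix.one_apply, Pi.single_apply, eq_comm]
      have hfg : f (fun i => (if i ∈ (univ : Finset (Fin n)) then (Pi.single i (1 : R) : Fin n → R)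
          else fun _ => (1 : R))) = 1 := by
        rw [hg]
        show Matrix.det (1 : Matrix (Fin n) (Fin n) R) = 1
        exact Matrix.det_one
      rw [hsmul, hfg, mul_one]
      have hz : ∀ i : Fin n,
          (if (univ : Finset (Fin n)) = univ.erase i then u i * ∏ j ∈ univ.erase i, d j else 0)
            = 0 := by
        intro i
        rw [if_neg]
        intro h
        have : i ∈ (univ : Finset (Fin n)) := mem_univ i
        rw [h] at this
        exact (Finset.notMem_erase i univ) this
      simp only [if_pos rfl, hz, Finset.sum_const_zero, add_zero]
      simp
    · -- s ≠ univ : pick i₀ ∉ s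
      obtain ⟨i₀, hi₀⟩ : ∃ i₀, i₀ ∉ s := by
        by_contra h
        push_neg at h
        exact hsu (Finset.eq_univ_iff_forall.mpr h)
      by_cases hse : s = univ.erase i₀
      · subst hse
        -- the rank-one term for i₀
        have hg : (fun i => (if i ∈ univ.erase i₀ then (Pi.single i (1 : R) : Fin n → R)
            else fun _ => (1 : R)))
            = Matrix.updateRow (1 : Matrix (Fin n) (Fin n) R) i₀ (fun _ => (1 : R)) := by
          funext i j
          by_cases h : i = i₀
          · subst h
            simp [Matrix.updateRow_self]
          · simp [Finset.mem_erase, h, Matrix.updateRow_ne h, Matrix.one_apply,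
              Pi.single_apply, eq_comm]
        have hones : (fun _ : Fin n => (1 : R))
            = ∑ kk : Fin n, (fun _ : Fin n => (1 : R)) kk • (1 : Matrix (Fin n) (Fin n) R) kk := by
          funext j
          rw [Finset.sum_apply]
          simp [Matrix.one_apply, Finset.sum_ite_eq]
        have hfg : f (fun i => (if i ∈ univ.erase i₀ then (Pi.single i (1 : R) : Fin n → R)
            else fun _ => (1 : R))) = 1 := by
          rw [hg]
          show Matrix.det (Matrix.updateRow (1 : Matrix (Fin n) (Fin n) R) i₀ fun _ => (1 : R)) = 1
          rw [hones, Matrix.det_updateRow_sum]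
          simp
        have hprod : (∏ i : Fin n, (if i ∈ univ.erase i₀ then d i else u i))
            = u i₀ * ∏ j ∈ univ.erase i₀, d j := by
          have hme := Finset.mul_prod_erase (univ : Finset (Fin n))
            (fun i => if i ∈ univ.erase i₀ then d i else u i) (mem_univ i₀)
          rw [← hme]
          congr 1
          · simp
          · exact Finset.prod_congr rfl fun j hj => if_pos hj
        rw [hsmul, hfg, mul_one, hprod]
        have hne_univ : univ.erase i₀ ≠ (univ : Finset (Fin n)) := by
          intro h
          have h1 : i₀ ∉ univ.erase i₀ := Finset.notMem_erase i₀ univ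
          rw [h] at h1
          exact h1 (mem_univ i₀)
        rw [if_neg hne_univ, zero_add]
        rw [Finset.sum_eq_single i₀]
        · rw [if_pos rfl]
        · intro b _ hb
          rw [if_neg]
          intro h
          have h1 : i₀ ∉ univ.erase i₀ := Finset.notMem_erase i₀ univ
          have h2 : i₀ ∈ univ.erase b :=
            Finset.mem_erase.mpr ⟨fun hc => hb hc.symm, mem_univ i₀⟩
          rw [h] at h1
          exact h1 h2
        · intro h
          exact absurd (mem_univ i₀) h
      · -- there are two indices missing from s : the determinant vanishes
        obtain ⟨i₁, hi₁, hne⟩ : ∃ i₁, i₁ ∉ s ∧ i₁ ≠ i₀ := by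
          by_contra h
          push_neg at h
          apply hse
          apply Finset.ext
          intro a
          constructor
          · intro ha
            exact Finset.mem_erase.mpr ⟨fun hai => hi₀ (hai ▸ ha), mem_univ a⟩
          · intro ha
            by_contra has
            exact (Finset.mem_erase.mp ha).1 (h a has)
        have hfg : f (fun i => (if i ∈ s then (Pi.single i (1 : R) : Fin n → R)
            else fun _ => (1 : R))) = 0 := by
          apply f.map_eq_zero_of_eq _ _ hne
          simp [hi₀, hi₁]
        rw [hsmul, hfg, mul_zero]
        rw [if_neg hsu]
        rw [Finset.sum_eq_zero, add_zero]
        intro i _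
        rw [if_neg]
        intro h
        subst h
        have hi₀' : i₀ = i := by
          by_contra hii
          exact hi₀ (Finset.mem_erase.mpr ⟨hii, mem_univ i₀⟩)
        have hi₁' : i₁ = i := by
          by_contra hii
          exact hi₁ (Finset.mem_erase.mpr ⟨hii, mem_univ i₁⟩)
        exact hne (hi₁'.trans hi₀'.symm)
  -- sum the key claim over all subsets
  have hadd' : (∑ s : Finset (Fin n), f (s.piecewise m m'))
      = ∏ i : Fin n, d i + ∑ i : Fin n, u i * ∏ j ∈ univ.erase i, d j := by
    rw [Finset.sum_congr rfl fun s _ => key s]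
    rw [Finset.sum_add_distrib]
    congr 1
    · rw [Finset.sum_ite_eq' univ (univ : Finset (Fin n)) (fun _ => ∏ i : Fin n, d i)]
      simp
    · rw [Finset.sum_comm]
      refine Finset.sum_congr rfl fun i _ => ?_
      rw [Finset.sum_ite_eq' univ (univ.erase i) (fun _ => u i * ∏ j ∈ univ.erase i, d j)]
      simp
  exact hadd'

/-- for the complete graph `K_k` (so `M = J + Id`),
`p_{K_k}(n) = ∏ᵢ (nᵢ − 2) + Σᵢ nᵢ ∏_{i'≠i} (n_{i'} − 2)`. -/
theorem blowup_poly_complete_graph (k : ℕ) (M : Matrix (Fin k) (Fin k) ℝ)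
    (hM : ∀ i j, M i j = if i = j then 2 else 1) :
    Matrix.det (Matrix.of fun i j : Fin k =>
        X i * C (M i j) - if i = j then (C 2 : MvPolynomial (Fin k) ℝ) else 0)
      = ∏ i : Fin k, (X i - C 2)
        + ∑ i : Fin k, X i * ∏ i' ∈ univ.erase i, (X i' - C 2) := by
  have hMat : (Matrix.of fun i j : Fin k =>
        X i * C (M i j) - if i = j then (C 2 : MvPolynomial (Fin k) ℝ) else 0)
      = Matrix.of fun i j : Fin k =>
          (if i = j then (X i - C 2 : MvPolynomial (Fin k) ℝ) else 0) + X i := by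
    refine Matrix.ext fun i j => ?_
    simp only [Matrix.of_apply, hM i j]
    have h2 : (C (2:ℝ) : MvPolynomial (Fin k) ℝ) = 2 := by
      rw [map_ofNat]
    have h1 : (C (1:ℝ) : MvPolynomial (Fin k) ℝ) = 1 := map_one C
    split_ifs with h
    · rw [h2]; ring
    · rw [h1]; ring
  rw [hMat, det_diag_add_const_rows (fun i => X i - C 2) (fun i => X i)]
end

section
/- Let M be a real symmetric k×k matrix. Define the family F of subsets I ⊆ {1,...,k} such that the principal submatrix M_{I×I} is invertible (with the empty set feasible). Then F satisfies the symmetric exchange axiom: for all A, B ∈ F and x ∈ A Δ B, there exists y ∈ A Δ B with A Δ {x,y} ∈ F. In other words, (({1,...,k}), F) is a delta-matroid provided every index lies in some feasible set. -/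
open Matrix Finset

namespace DeltaHelper

variable {k : ℕ}

/-- kernel condition: no nonzero vector supported on `S` is killed on `S`. -/
def KerCond (P : Matrix (Fin k) (Fin k) ℝ) (S : Finset (Fin k)) : Prop :=
  ∀ v : Fin k → ℝ, (∀ i, i ∉ S → v i = 0) → (∀ i ∈ S, P.mulVec v i = 0) → v = 0

lemma det_ne_iff_kerCond (P : Matrix (Fin k) (Fin k) ℝ) (S : Finset (Fin k)) :
    (P.submatrix (fun i : S => (i : Fin k)) (fun i : S => (i : Fin k))).det ≠ 0 ↔ KerCond P S := by
  constructor
  · intro hdet v hsupp hker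
    by_contra hv
    apply hdet
    rw [← Matrix.exists_mulVec_eq_zero_iff]
    refine ⟨fun j : S => v j, ?_, ?_⟩
    · intro h0
      apply hv
      funext i
      by_cases hi : i ∈ S
      · exact congrFun h0 ⟨i, hi⟩
      · exact hsupp i hi
    · funext i
      have key : ∑ j ∈ S.attach, P (i : Fin k) (j : Fin k) * v j = P.mulVec v i := by
        rw [Finset.sum_attach S (fun j => P (i : Fin k) j * v j)]
        rw [Matrix.mulVec, dotProduct]
        refine Finset.sum_subset (Finset.subset_univ S) ?_
        intro j _ hj
        rw [hsupp j hj, mul_zero]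
      simpa [Matrix.mulVec, dotProduct, Matrix.submatrix, Finset.univ_eq_attach, key]
        using hker i i.2
  · intro hker hdet
    rw [← Matrix.exists_mulVec_eq_zero_iff] at hdet
    obtain ⟨w, hw, hw0⟩ := hdet
    apply hw
    set v : Fin k → ℝ := fun i => if h : i ∈ S then w ⟨i, h⟩ else 0 with hv
    have hveq : v = 0 := by
      apply hker
      · intro i hi; simp [hv, hi]
      · intro i hi
        have key : P.mulVec v i = ∑ j : S, P i (j : Fin k) * w j := by
          rw [Matrix.mulVec, dotProduct]
          calc ∑ j : Fin k, P i j * v j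
              = ∑ j ∈ S, P i j * v j :=
                (Finset.sum_subset (Finset.subset_univ S)
                  (fun j _ hj => by simp [hv, hj])).symm
            _ = ∑ j : S, P i (j : Fin k) * v j := (Finset.sum_coe_sort S _).symm
            _ = ∑ j : S, P i (j : Fin k) * w j := by
                refine Finset.sum_congr rfl fun j _ => ?_
                simp [hv, j.2]
        have := congrFun hw0 ⟨i, hi⟩
        rw [key]
        simpa [Matrix.mulVec, dotProduct, Matrix.submatrix, Finset.univ_eq_attach]
          using this
    funext j
    have := congrFun hveq j
    simpa [hv, j.2] using this


section Pivot

variable (M : Matrix (Fin k) (Fin k) ℝ) (A : Finset (Fin k))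

/-- on rows in `A` act like `M`, elsewhere like the identity. -/
def Tm : Matrix (Fin k) (Fin k) ℝ :=
  Matrix.of fun i j => if i ∈ A then M i j else if i = j then 1 else 0

def Tm' : Matrix (Fin k) (Fin k) ℝ :=
  Matrix.of fun i j => if i ∈ A then (if i = j then 1 else 0) else M i j

def Sg (A' : Finset (Fin k)) : Matrix (Fin k) (Fin k) ℝ :=
  Matrix.diagonal fun i => if i ∈ A' then (-1 : ℝ) else 1

lemma Tm_mulVec (v : Fin k → ℝ) (i : Fin k) :
    (Tm M A).mulVec v i = if i ∈ A then M.mulVec v i else v i := by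
  by_cases hi : i ∈ A <;>
    simp [Tm, Matrix.mulVec, dotProduct, hi, ite_mul, Finset.sum_ite_eq]

lemma Tm'_mulVec (v : Fin k → ℝ) (i : Fin k) :
    (Tm' M A).mulVec v i = if i ∈ A then v i else M.mulVec v i := by
  by_cases hi : i ∈ A <;>
    simp [Tm', Matrix.mulVec, dotProduct, hi, ite_mul, Finset.sum_ite_eq]

lemma Tm_isUnit (hA : KerCond M A) : IsUnit (Tm M A).det := by
  rw [isUnit_iff_ne_zero, Ne, ← Matrix.exists_mulVec_eq_zero_iff]
  rintro ⟨v, hv, h0⟩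
  apply hv
  apply hA
  · intro i hi
    have := congrFun h0 i
    rwa [Tm_mulVec, if_neg hi] at this
  · intro i hi
    have := congrFun h0 i
    rwa [Tm_mulVec, if_pos hi] at this

lemma key_identity (hSymm : M.IsSymm) :
    (Tm M A)ᵀ * (Sg A * Tm' M A) = (Tm' M A)ᵀ * (Sg A * Tm M A) := by
  ext i j
  have hs : ∀ a b : Fin k, M a b = M b a := fun a b => Matrix.IsSymm.apply hSymm b a
  have hD : ∀ (P : Matrix (Fin k) (Fin k) ℝ) (a b : Fin k),
      (Sg A * P) a b = (if a ∈ A then (-1 : ℝ) else 1) * P a b := fun P a b =>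
    Matrix.diagonal_mul _ _ _ _
  simp only [Matrix.mul_apply, Matrix.transpose_apply, hD]
  have L : ∀ a : Fin k,
      Tm M A a i * ((if a ∈ A then (-1 : ℝ) else 1) * Tm' M A a j)
        = (if a = j then (if a ∈ A then -(M a i) else 0) else 0)
          + (if a = i then (if a ∈ A then 0 else M a j) else 0) := by
    intro a
    rcases eq_or_ne a j with rfl | haj
    · rcases eq_or_ne a i with rfl | hai
      · by_cases ha : a ∈ A <;> simp [Tm, Tm', ha] <;> ring
      · by_cases ha : a ∈ A <;> simp [Tm, Tm', ha, hai] <;> ring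
    · rcases eq_or_ne a i with rfl | hai
      · by_cases ha : a ∈ A <;> simp [Tm, Tm', ha, haj] <;> ring
      · by_cases ha : a ∈ A <;> simp [Tm, Tm', ha, hai, haj] <;> ring
  have R : ∀ a : Fin k,
      Tm' M A a i * ((if a ∈ A then (-1 : ℝ) else 1) * Tm M A a j)
        = (if a = i then (if a ∈ A then -(M a j) else 0) else 0)
          + (if a = j then (if a ∈ A then 0 else M a i) else 0) := by
    intro a
    rcases eq_or_ne a j with rfl | haj
    · rcases eq_or_ne a i with rfl | hai
      · by_cases ha : a ∈ A <;> simp [Tm, Tm', ha] <;> ring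
      · by_cases ha : a ∈ A <;> simp [Tm, Tm', ha, hai] <;> ring
    · rcases eq_or_ne a i with rfl | hai
      · by_cases ha : a ∈ A <;> simp [Tm, Tm', ha, haj] <;> ring
      · by_cases ha : a ∈ A <;> simp [Tm, Tm', ha, hai, haj] <;> ring
  rw [Finset.sum_congr rfl fun a _ => L a, Finset.sum_congr rfl fun a _ => R a,
    Finset.sum_add_distrib, Finset.sum_add_distrib,
    Finset.sum_ite_eq' Finset.univ j, Finset.sum_ite_eq' Finset.univ i,
    Finset.sum_ite_eq' Finset.univ i, Finset.sum_ite_eq' Finset.univ j]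
  by_cases hi : i ∈ A <;> by_cases hj : j ∈ A <;> simp [hi, hj, hs i j]

lemma sign_symm (hSymm : M.IsSymm) (hUnit : IsUnit (Tm M A).det) :
    Sg A * (Tm' M A * (Tm M A)⁻¹) = (Tm' M A * (Tm M A)⁻¹)ᵀ * Sg A := by
  have hUnitT : IsUnit (Tm M A)ᵀ.det := by rwa [Matrix.det_transpose]
  haveI : Invertible (Tm M A)ᵀ := (Tm M A)ᵀ.invertibleOfIsUnitDet hUnitT
  calc Sg A * (Tm' M A * (Tm M A)⁻¹)
      = (Tm M A)ᵀ⁻¹ * ((Tm M A)ᵀ * (Sg A * (Tm' M A * (Tm M A)⁻¹))) :=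
        (Matrix.inv_mul_cancel_left_of_invertible _ _).symm
    _ = (Tm M A)ᵀ⁻¹ * (((Tm M A)ᵀ * (Sg A * Tm' M A)) * (Tm M A)⁻¹) := by
        simp only [Matrix.mul_assoc]
    _ = (Tm M A)ᵀ⁻¹ * (((Tm' M A)ᵀ * (Sg A * Tm M A)) * (Tm M A)⁻¹) := by
        rw [key_identity M A hSymm]
    _ = (Tm M A)ᵀ⁻¹ * ((Tm' M A)ᵀ * (Sg A * (Tm M A * (Tm M A)⁻¹))) := by
        simp only [Matrix.mul_assoc]
    _ = (Tm M A)ᵀ⁻¹ * ((Tm' M A)ᵀ * Sg A) := by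
        rw [Matrix.mul_nonsing_inv _ hUnit, Matrix.mul_one]
    _ = (Tm' M A * (Tm M A)⁻¹)ᵀ * Sg A := by
        rw [Matrix.transpose_mul, Matrix.transpose_nonsing_inv]
        simp only [Matrix.mul_assoc]

lemma transfer (hUnit : IsUnit (Tm M A).det) (S : Finset (Fin k)) :
    KerCond M (symmDiff A S) ↔ KerCond (Tm' M A * (Tm M A)⁻¹) S := by
  constructor
  · intro h u hsupp hker
    set v : Fin k → ℝ := (Tm M A)⁻¹.mulVec u with hv
    have hTv : (Tm M A).mulVec v = u := by
      rw [hv, Matrix.mulVec_mulVec, Matrix.mul_nonsing_inv _ hUnit, Matrix.one_mulVec]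
    have hNT : ∀ i, (Tm' M A * (Tm M A)⁻¹).mulVec u i = (Tm' M A).mulVec v i := by
      intro i; rw [hv, ← Matrix.mulVec_mulVec]
    have hv0 : v = 0 := by
      apply h
      · intro i hi
        by_cases hiA : i ∈ A
        · have hiS : i ∈ S := by
            by_contra hiS
            exact hi (Finset.mem_symmDiff.mpr (Or.inl ⟨hiA, hiS⟩))
          have h2 := hker i hiS
          rwa [hNT i, Tm'_mulVec, if_pos hiA] at h2
        · have hiS : i ∉ S := fun hiS =>
            hi (Finset.mem_symmDiff.mpr (Or.inr ⟨hiS, hiA⟩))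
          have h2 := (congrFun hTv i).trans (hsupp i hiS)
          rwa [Tm_mulVec, if_neg hiA] at h2
      · intro i hi
        rcases Finset.mem_symmDiff.mp hi with ⟨hiA, hiS⟩ | ⟨hiS, hiA⟩
        · have h2 := (congrFun hTv i).trans (hsupp i hiS)
          rwa [Tm_mulVec, if_pos hiA] at h2
        · have h2 := hker i hiS
          rwa [hNT i, Tm'_mulVec, if_neg hiA] at h2
    rw [← hTv, hv0, Matrix.mulVec_zero]
  · intro h v hsupp hker
    have hu0 : (Tm M A).mulVec v = 0 := by
      apply h
      · intro i hiS
        rw [Tm_mulVec]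
        by_cases hiA : i ∈ A
        · rw [if_pos hiA]
          exact hker i (Finset.mem_symmDiff.mpr (Or.inl ⟨hiA, hiS⟩))
        · rw [if_neg hiA]
          apply hsupp
          intro hmem
          rcases Finset.mem_symmDiff.mp hmem with ⟨h1, _⟩ | ⟨h1, _⟩
          · exact hiA h1
          · exact hiS h1
      · intro i hiS
        have hNv : (Tm' M A * (Tm M A)⁻¹).mulVec ((Tm M A).mulVec v) i
            = (Tm' M A).mulVec v i := by
          rw [Matrix.mulVec_mulVec, Matrix.mul_assoc, Matrix.nonsing_inv_mul _ hUnit,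
            Matrix.mul_one]
        rw [hNv, Tm'_mulVec]
        by_cases hiA : i ∈ A
        · rw [if_pos hiA]
          apply hsupp
          intro hmem
          rcases Finset.mem_symmDiff.mp hmem with ⟨_, h2⟩ | ⟨_, h2⟩
          · exact h2 hiS
          · exact h2 hiA
        · rw [if_neg hiA]
          exact hker i (Finset.mem_symmDiff.mpr (Or.inr ⟨hiS, hiA⟩))
    have h3 := congrArg (fun w => (Tm M A)⁻¹.mulVec w) hu0
    simpa [Matrix.mulVec_mulVec, Matrix.nonsing_inv_mul _ hUnit, Matrix.one_mulVec,
      Matrix.mulVec_zero] using h3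


end Pivot

end DeltaHelper

/-- for a real symmetric k×k matrix `M`, the family of subsets
`I ⊆ {1,…,k}` with `M_{I×I}` invertible satisfies the symmetric exchange axiom
(the linear delta-matroid of `M`). -/
theorem principal_minors_symmetric_exchange (k : ℕ) (M : Matrix (Fin k) (Fin k) ℝ)
    (hSymm : M.IsSymm)
    (F : Finset (Fin k) → Prop)
    (hF : ∀ I, F I ↔ (M.submatrix (fun i : I => (i : Fin k)) (fun i : I => (i : Fin k))).det ≠ 0) :
    ∀ A B : Finset (Fin k), F A → F B → ∀ x ∈ symmDiff A B,
      ∃ y ∈ symmDiff A B, F (symmDiff A ({x, y} : Finset (Fin k))) := by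
  intro A B hFA hFB x hx
  rw [hF, DeltaHelper.det_ne_iff_kerCond] at hFA hFB
  have hUnit : IsUnit (DeltaHelper.Tm M A).det := DeltaHelper.Tm_isUnit M A hFA
  set N := DeltaHelper.Tm' M A * (DeltaHelper.Tm M A)⁻¹ with hN
  have hWker : DeltaHelper.KerCond N (symmDiff A B) := by
    rw [hN, ← DeltaHelper.transfer M A hUnit]
    rwa [symmDiff_symmDiff_cancel_left]
  have hsg : ∀ i j : Fin k,
      (if i ∈ A then (-1 : ℝ) else 1) * N i j = N j i * (if j ∈ A then (-1 : ℝ) else 1) := by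
    intro i j
    have h4 := congrFun (congrFun (DeltaHelper.sign_symm M A hSymm hUnit) i) j
    rw [← hN] at h4
    simpa [DeltaHelper.Sg, Matrix.diagonal_mul, Matrix.mul_diagonal,
      Matrix.transpose_apply] using h4
  have hNsym : ∀ i j : Fin k, N i j ≠ 0 → N j i ≠ 0 := by
    intro i j hij h0
    have h5 := hsg i j
    rw [h0, zero_mul] at h5
    rcases mul_eq_zero.mp h5 with h6 | h6
    · split_ifs at h6 <;> norm_num at h6
    · exact hij h6
  by_cases hxx : N x x ≠ 0
  · refine ⟨x, hx, ?_⟩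
    have hpair : ({x, x} : Finset (Fin k)) = {x} := by simp
    rw [hpair, hF, DeltaHelper.det_ne_iff_kerCond, DeltaHelper.transfer M A hUnit, ← hN]
    intro v hsupp hker
    have hvx : v x = 0 := by
      have h1 := hker x (Finset.mem_singleton_self x)
      have h2 : N.mulVec v x = N x x * v x := by
        rw [Matrix.mulVec, dotProduct]
        exact Finset.sum_eq_single x
          (fun b _ hb => by rw [hsupp b (by simp [hb]), mul_zero])
          (fun h => absurd (Finset.mem_univ x) h)
      rw [h2] at h1
      exact (mul_eq_zero.mp h1).resolve_left hxx
    funext i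
    by_cases hix : i = x
    · rw [hix]; exact hvx
    · exact hsupp i (by simp [hix])
  · push_neg at hxx
    have hrow : ∃ y ∈ symmDiff A B, N x y ≠ 0 := by
      by_contra hcon
      push_neg at hcon
      have hdet := (DeltaHelper.det_ne_iff_kerCond N (symmDiff A B)).mpr hWker
      apply hdet
      apply Matrix.det_eq_zero_of_row_eq_zero ⟨x, hx⟩
      intro j
      exact hcon j j.2
    obtain ⟨y, hyW, hxy⟩ := hrow
    have hne : x ≠ y := by rintro rfl; exact hxy hxx
    have hyx : N y x ≠ 0 := hNsym x y hxy
    refine ⟨y, hyW, ?_⟩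
    rw [hF, DeltaHelper.det_ne_iff_kerCond, DeltaHelper.transfer M A hUnit, ← hN]
    intro v hsupp hker
    have hsum : ∀ i, N.mulVec v i = N i x * v x + N i y * v y := by
      intro i
      rw [Matrix.mulVec, dotProduct]
      calc ∑ j, N i j * v j
          = ∑ j ∈ ({x, y} : Finset (Fin k)), N i j * v j :=
            (Finset.sum_subset (Finset.subset_univ _)
              (fun j _ hj => by rw [hsupp j hj, mul_zero])).symm
        _ = N i x * v x + N i y * v y := Finset.sum_pair hne
    have h1 := hker x (by simp)
    have hvy : v y = 0 := by
      rw [hsum x, hxx, zero_mul, zero_add] at h1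
      exact (mul_eq_zero.mp h1).resolve_left hxy
    have h2 := hker y (by simp)
    have hvx : v x = 0 := by
      rw [hsum y, hvy, mul_zero, add_zero] at h2
      exact (mul_eq_zero.mp h2).resolve_left hyx
    funext i
    by_cases hix : i = x
    · rw [hix]; exact hvx
    · by_cases hiy : i = y
      · rw [hiy]; exact hvy
      · exact hsupp i (by simp [hix, hiy])
end

section
/- The blowup polynomial p_G(n_1,...,n_k) = det(Δ_n M_G − 2·Id_k) of a finite simple connected graph G is a symmetric polynomial in n_1,...,n_k if and only if G is a complete graph. -/
open MvPolynomial

lemma det_aux {k : ℕ} (a b : Fin k) (hab : a ≠ b) (B : Matrix (Fin k) (Fin k) ℝ)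
    (hrow : ∀ r c, r ≠ a → r ≠ b → B r c = if r = c then (-2) else 0)
    (haa : B a a = 0) (hbb : B b b = 0) :
    B.det = -(B b a * (B a b * (-2 : ℝ)^(k-2))) := by
  classical
  rw [Matrix.det_apply]
  have hsw : (1 : Equiv.Perm (Fin k)) ≠ Equiv.swap a b := by
    intro h
    have := congrArg (fun e => e a) h
    simp [Equiv.swap_apply_left] at this
    exact hab this
  rw [← Finset.sum_subset (Finset.subset_univ ({1, Equiv.swap a b} : Finset (Equiv.Perm (Fin k)))) ?hvanish]
  case hvanish =>
    intro σ _ hσ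
    simp only [Finset.mem_insert, Finset.mem_singleton] at hσ
    push_neg at hσ
    obtain ⟨h1, h2⟩ := hσ
    -- find j outside {a,b} with σ j ≠ j
    by_cases hfix : ∀ j : Fin k, j ≠ a → j ≠ b → σ j = j
    · exfalso
      have hσa : σ a = a ∨ σ a = b := by
        by_contra h'
        push_neg at h'
        have : σ (σ a) = σ a := hfix _ h'.1 h'.2
        exact h'.1 (σ.injective this)
      have hσb : σ b = a ∨ σ b = b := by
        by_contra h'
        push_neg at h'
        have : σ (σ b) = σ b := hfix _ h'.1 h'.2
        exact h'.2 (σ.injective this)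
      rcases hσa with ha' | ha'
      · apply h1
        ext j
        by_cases hja : j = a
        · simp [hja, ha']
        by_cases hjb : j = b
        · rcases hσb with hb' | hb'
          · exact absurd (σ.injective (ha'.trans hb'.symm)) hab
          · simp [hjb, hb']
        · simp [hfix j hja hjb]
      · apply h2
        ext j
        by_cases hja : j = a
        · simp [hja, ha', Equiv.swap_apply_left]
        by_cases hjb : j = b
        · rcases hσb with hb' | hb'
          · simp [hjb, hb', Equiv.swap_apply_right]
          · exact absurd (σ.injective (ha'.trans hb'.symm)) hab
        · simp [hfix j hja hjb, Equiv.swap_apply_of_ne_of_ne hja hjb]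
    · push_neg at hfix
      obtain ⟨j, hja, hjb, hj⟩ := hfix
      have hz : B (σ (σ⁻¹ j)) (σ⁻¹ j) = 0 := by
        rw [Equiv.Perm.coe_inv, Equiv.apply_symm_apply]
        rw [hrow j _ hja hjb]
        rw [if_neg]
        intro h
        apply hj
        conv_lhs => rw [h]
        exact σ.apply_symm_apply j
      have : (∏ i, B (σ i) i) = 0 :=
        Finset.prod_eq_zero (Finset.mem_univ (σ⁻¹ j)) hz
      rw [this, smul_zero]
  · rw [Finset.sum_pair hsw]
    have h1 : (∏ i, B ((1 : Equiv.Perm (Fin k)) i) i) = 0 :=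
      Finset.prod_eq_zero (Finset.mem_univ a) (by simpa using haa)
    have hbmem : b ∈ (Finset.univ : Finset (Fin k)).erase a :=
      Finset.mem_erase.mpr ⟨hab.symm, Finset.mem_univ b⟩
    have hprod : (∏ i, B (Equiv.swap a b i) i) = B b a * (B a b * (-2:ℝ)^(k-2)) := by
      rw [← Finset.mul_prod_erase Finset.univ _ (Finset.mem_univ a),
          ← Finset.mul_prod_erase _ _ hbmem, Equiv.swap_apply_left, Equiv.swap_apply_right]
      congr 1
      congr 1
      have hconst : ∀ i ∈ ((Finset.univ : Finset (Fin k)).erase a).erase b,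
          B (Equiv.swap a b i) i = -2 := by
        intro i hi
        have hib : i ≠ b := (Finset.mem_erase.mp hi).1
        have hia : i ≠ a := (Finset.mem_erase.mp (Finset.mem_erase.mp hi).2).1
        rw [Equiv.swap_apply_of_ne_of_ne hia hib, hrow i i hia hib, if_pos rfl]
      rw [Finset.prod_congr rfl hconst, Finset.prod_const]
      congr 1
      rw [Finset.card_erase_of_mem hbmem, Finset.card_erase_of_mem (Finset.mem_univ a),
        Finset.card_univ, Fintype.card_fin]
      omega
    rw [h1, hprod, Equiv.Perm.sign_swap hab]
    simp


lemma eval_p {k : ℕ} (G : SimpleGraph (Fin k)) [DecidableRel G.Adj]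
    (M : Matrix (Fin k) (Fin k) ℝ)
    (hM : ∀ i j, M i j = (G.dist i j : ℝ) + if i = j then 2 else 0)
    (a b : Fin k) (hab : a ≠ b) :
    MvPolynomial.eval (fun r => if r = a then (1:ℝ) else if r = b then 1 else 0)
      (Matrix.det (Matrix.of fun i j : Fin k =>
        X i * C (M i j) - if i = j then (C 2 : MvPolynomial (Fin k) ℝ) else 0))
      = -((G.dist b a : ℝ) * ((G.dist a b : ℝ) * (-2:ℝ)^(k-2))) := by
  classical
  set v : Fin k → ℝ := fun r => if r = a then (1:ℝ) else if r = b then 1 else 0 with hv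
  rw [RingHom.map_det, RingHom.mapMatrix_apply]
  set B := (Matrix.of fun i j : Fin k =>
        X i * C (M i j) - if i = j then (C 2 : MvPolynomial (Fin k) ℝ) else 0).map
        (MvPolynomial.eval v) with hB
  have hBent : ∀ i j, B i j = v i * M i j - if i = j then 2 else 0 := by
    intro i j
    simp only [hB, Matrix.map_apply, Matrix.of_apply]
    by_cases h : i = j <;> simp [h]
  have haa : B a a = 0 := by
    rw [hBent, hM]
    simp [v, SimpleGraph.dist_self]
  have hbb : B b b = 0 := by
    rw [hBent, hM]
    simp [v, hab.symm, SimpleGraph.dist_self]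
  have hrow : ∀ r c, r ≠ a → r ≠ b → B r c = if r = c then (-2:ℝ) else 0 := by
    intro r c hra hrb
    rw [hBent]
    have : v r = 0 := by simp [v, hra, hrb]
    rw [this]
    by_cases h : r = c <;> simp [h]
  have hab' : B a b = (G.dist a b : ℝ) := by
    rw [hBent, hM]
    simp [v, hab]
  have hba' : B b a = (G.dist b a : ℝ) := by
    rw [hBent, hM]
    simp [v, hab.symm]
  rw [det_aux a b hab B hrow haa hbb, hab', hba']

/-- the blowup polynomial `p_G = det(Δ_n M_G − 2 Id)` of a finite simple
connected graph `G` on `k ≥ 2` vertices is a symmetric polynomial iff `G` is complete. -/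
theorem blowup_poly_symmetric_iff_complete (k : ℕ) (hk : 2 ≤ k)
    (G : SimpleGraph (Fin k)) [DecidableRel G.Adj] (hG : G.Connected)
    (M : Matrix (Fin k) (Fin k) ℝ)
    (hM : ∀ i j, M i j = (G.dist i j : ℝ) + if i = j then 2 else 0)
    (p : MvPolynomial (Fin k) ℝ)
    (hp : p = Matrix.det (Matrix.of fun i j : Fin k =>
      X i * C (M i j) - if i = j then (C 2 : MvPolynomial (Fin k) ℝ) else 0)) :
    p.IsSymmetric ↔ G = ⊤ := by
  classical
  constructor
  · intro hsym
    by_contra hne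
    obtain ⟨c, e, hce, hnadj⟩ : ∃ c e : Fin k, c ≠ e ∧ ¬ G.Adj c e := by
      by_contra h
      push_neg at h
      apply hne
      ext x y
      simp only [SimpleGraph.top_adj]
      exact ⟨fun hxy => G.ne_of_adj hxy, h x y⟩
    obtain ⟨a, b, hadj⟩ : ∃ a b : Fin k, G.Adj a b := by
      have h01 : (⟨0, by omega⟩ : Fin k) ≠ ⟨1, by omega⟩ := by simp [Fin.ext_iff]
      obtain ⟨w⟩ := hG.preconnected ⟨0, by omega⟩ ⟨1, by omega⟩
      cases w with
      | cons h _ => exact ⟨_, _, h⟩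
    have hab : a ≠ b := G.ne_of_adj hadj
    set b₁ := Equiv.swap a c b with hb1
    have hcb1 : c ≠ b₁ := by
      intro h
      exact hab ((Equiv.swap a c).injective
        (by rw [Equiv.swap_apply_left, ← hb1, ← h]))
    set σ : Equiv.Perm (Fin k) := (Equiv.swap a c).trans (Equiv.swap b₁ e) with hσ
    have hσa : σ a = c := by
      simp only [hσ, Equiv.trans_apply, Equiv.swap_apply_left]
      exact Equiv.swap_apply_of_ne_of_ne hcb1 hce
    have hσb : σ b = e := by
      simp only [hσ, Equiv.trans_apply, ← hb1, Equiv.swap_apply_left]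
    set v : Fin k → ℝ := fun r => if r = c then (1:ℝ) else if r = e then 1 else 0 with hv
    have hcomp : (v ∘ ⇑σ) = fun r => if r = a then (1:ℝ) else if r = b then 1 else 0 := by
      funext r
      simp only [Function.comp_apply, hv]
      by_cases hra : r = a
      · simp [hra, hσa]
      · by_cases hrb : r = b
        · simp [hrb, hσb, Ne.symm hce, Ne.symm hab]
        · have h1 : σ r ≠ c := fun h => hra (σ.injective (h.trans hσa.symm))
          have h2 : σ r ≠ e := fun h => hrb (σ.injective (h.trans hσb.symm))
          simp [h1, h2, hra, hrb]
    have heq : MvPolynomial.eval v p = MvPolynomial.eval (v ∘ ⇑σ) p := by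
      conv_lhs => rw [← hsym σ]
      rw [eval_rename]
    rw [hcomp, hp] at heq
    rw [eval_p G M hM c e hce, eval_p G M hM a b hab] at heq
    have hd1 : G.dist a b = 1 := SimpleGraph.dist_eq_one_iff_adj.mpr hadj
    have hd1' : G.dist b a = 1 := by rw [SimpleGraph.dist_comm]; exact hd1
    have hd2 : 2 ≤ G.dist c e := by
      have hpos := hG.pos_dist_of_ne hce
      have hne1 : G.dist c e ≠ 1 := fun h => hnadj (SimpleGraph.dist_eq_one_iff_adj.mp h)
      omega
    have hdec : G.dist e c = G.dist c e := SimpleGraph.dist_comm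
    rw [hdec, hd1, hd1'] at heq
    have hs : ((-2:ℝ))^(k-2) ≠ 0 := pow_ne_zero _ (by norm_num)
    have h2r : (2:ℝ) ≤ (G.dist c e : ℝ) := by exact_mod_cast hd2
    have heq' : ((G.dist c e : ℝ) * (G.dist c e)) * (-2:ℝ)^(k-2) = 1 * (-2:ℝ)^(k-2) := by
      have := neg_inj.mp heq
      push_cast at this
      linarith [this]
    have := mul_right_cancel₀ hs heq'
    nlinarith [this, h2r]
  · intro h
    subst h
    have hM' : ∀ i j : Fin k, M i j = if i = j then 2 else 1 := by
      intro i j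
      rw [hM]
      by_cases hij : i = j
      · simp [hij, SimpleGraph.dist_self]
      · have hd : (⊤ : SimpleGraph (Fin k)).dist i j = 1 :=
          SimpleGraph.dist_eq_one_iff_adj.mpr (by simp [hij])
        simp [hij, hd]
    intro σ
    rw [hp, AlgHom.map_det, AlgHom.mapMatrix_apply]
    have key : (Matrix.of fun i j : Fin k =>
        X i * C (M i j) - if i = j then (C 2 : MvPolynomial (Fin k) ℝ) else 0).map
        (rename ⇑σ) = (Matrix.of fun i j : Fin k =>
        X i * C (M i j) - if i = j then (C 2 : MvPolynomial (Fin k) ℝ) else 0).submatrix σ σ := by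
      ext i j
      simp only [Matrix.map_apply, Matrix.of_apply, Matrix.submatrix_apply]
      rw [map_sub, map_mul, rename_X, rename_C, hM' i j, hM' (σ i) (σ j)]
      by_cases hij : i = j
      · simp [hij]
      · have hσij : σ i ≠ σ j := fun h' => hij (σ.injective h')
        simp [hij, hσij]
    rw [key, Matrix.det_submatrix_equiv_self]
end

section
/- The Hessian at the origin of the blowup polynomial recovers the graph: (∂_{n_i} ∂_{n_j} p_G)(0) = (−2)^k − (−2)^{k−2}·(M_G)_{ij}² for i ≠ j, where p_G(n) = det(Δ_n M_G − 2·Id_k). In particular, the polynomial p_G determines the matrix of squared entries of M_G off the diagonal, hence determines D_G. -/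
open MvPolynomial Finset

lemma pderiv_prod_aux {σ : Type*} [DecidableEq σ]
    (c : σ → ℝ) (g : σ → MvPolynomial σ ℝ)
    (hg : ∀ t r, pderiv t (g r) = if t = r then C (c r) else 0)
    (s : Finset σ) (j : σ) (hj : j ∈ s) :
    pderiv j (∏ r ∈ s, g r) = C (c j) * ∏ r ∈ s.erase j, g r := by
  rw [← Finset.prod_erase_mul s g hj, pderiv_mul]
  have h0 : pderiv j (∏ r ∈ s.erase j, g r) = 0 := by
    refine Finset.prod_induction _ (fun x => pderiv j x = 0) ?_ ?_ ?_
    · intro a b ha hb; rw [pderiv_mul, ha, hb]; ring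
    · simp
    · intro r hr
      rw [hg]
      simp [(Finset.ne_of_mem_erase hr).symm]
  rw [h0, hg]
  simp [mul_comm]

/-- the Hessian of the blowup polynomial at the origin recovers `G`:
for `i ≠ j`, `(∂ᵢ∂ⱼ p_G)(0) = (−2)^k − (−2)^(k−2)·(M_G)ᵢⱼ²`. -/
theorem blowup_poly_hessian (k : ℕ) (hk : 2 ≤ k) (G : SimpleGraph (Fin k))
    [DecidableRel G.Adj] (hG : G.Connected)
    (M : Matrix (Fin k) (Fin k) ℝ)
    (hM : ∀ i j, M i j = (G.dist i j : ℝ) + if i = j then 2 else 0)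
    (p : MvPolynomial (Fin k) ℝ)
    (hp : p = Matrix.det (Matrix.of fun i j : Fin k =>
      X i * C (M i j) - if i = j then (C 2 : MvPolynomial (Fin k) ℝ) else 0)) :
    ∀ i j : Fin k, i ≠ j →
      eval (fun _ => (0 : ℝ)) (pderiv i (pderiv j p))
        = (-2 : ℝ) ^ k - (-2 : ℝ) ^ (k - 2) * (M i j) ^ 2 := by
  intro i j hij
  subst hp
  have hMsymm : M j i = M i j := by
    rw [hM, hM]; simp [hij, hij.symm, SimpleGraph.dist_comm]
  have hMii : M i i = 2 := by rw [hM]; simp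
  have hMjj : M j j = 2 := by rw [hM]; simp
  have hdet : (Matrix.det (Matrix.of fun i j : Fin k =>
      X i * C (M i j) - if i = j then (C 2 : MvPolynomial (Fin k) ℝ) else 0))
      = ∑ σ : Equiv.Perm (Fin k), Equiv.Perm.sign σ •
        ∏ r : Fin k, (X r * C (M r (σ r)) - if r = σ r then (C 2 : MvPolynomial (Fin k) ℝ) else 0) := by
    rw [← Matrix.det_transpose, Matrix.det_apply]
    rfl
  rw [hdet, map_sum, map_sum, map_sum]
  have hiS : i ∈ (Finset.univ.erase j : Finset (Fin k)) :=
    Finset.mem_erase.mpr ⟨hij, Finset.mem_univ i⟩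
  set S : Finset (Fin k) := (Finset.univ.erase j).erase i with hS
  have hcardS : S.card = k - 2 := by
    rw [hS, Finset.card_erase_of_mem hiS, Finset.card_erase_of_mem (Finset.mem_univ j),
      Finset.card_univ, Fintype.card_fin]
    omega
  have key : ∀ σ : Equiv.Perm (Fin k),
      eval (fun _ => (0:ℝ)) (pderiv i (pderiv j (Equiv.Perm.sign σ •
        ∏ r : Fin k, (X r * C (M r (σ r)) - if r = σ r then (C 2 : MvPolynomial (Fin k) ℝ) else 0))))
      = (Equiv.Perm.sign σ : ℤ) • (M i (σ i) * M j (σ j) *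
          ∏ r ∈ S, (if r = σ r then (-2:ℝ) else 0)) := by
    intro σ
    set g : Fin k → MvPolynomial (Fin k) ℝ :=
      fun r => X r * C (M r (σ r)) - if r = σ r then C 2 else 0 with hgdef
    have hg : ∀ t r, pderiv t (g r) = if t = r then C (M r (σ r)) else 0 := by
      intro t r
      have hconst : pderiv t (if r = σ r then (C 2 : MvPolynomial (Fin k) ℝ) else 0) = 0 := by
        split_ifs <;> simp
      simp only [hgdef]
      rw [map_sub, hconst, sub_zero, pderiv_mul, pderiv_C, mul_zero, add_zero, pderiv_X,
        Pi.single_apply]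
      rcases eq_or_ne t r with rfl | h2
      · simp
      · simp [h2, Ne.symm h2]
    rw [Units.smul_def, map_zsmul, map_zsmul, map_zsmul]
    congr 1
    rw [pderiv_prod_aux (fun r => M r (σ r)) g hg Finset.univ j (Finset.mem_univ j),
      pderiv_mul, pderiv_C,
      pderiv_prod_aux (fun r => M r (σ r)) g hg (Finset.univ.erase j) i hiS]
    have heval0 : ∀ r, eval (fun _ => (0:ℝ)) (g r) = (if r = σ r then (-2:ℝ) else 0) := by
      intro r
      have hgr : g r = X r * C (M r (σ r)) - if r = σ r then C 2 else 0 := rfl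
      rw [hgr]
      split_ifs with h <;> simp
    simp only [map_mul, map_sub, map_prod, eval_C, zero_mul, zero_sub, zero_add]
    rw [Finset.prod_congr rfl (fun r _ => heval0 r)]
    ring
  simp only [key]
  have vanish : ∀ σ : Equiv.Perm (Fin k), σ ∉ ({1, Equiv.swap i j} : Finset (Equiv.Perm (Fin k))) →
      ∏ r ∈ S, (if r = σ r then (-2:ℝ) else 0) = 0 := by
    intro σ hσ
    simp only [Finset.mem_insert, Finset.mem_singleton, not_or] at hσ
    obtain ⟨h1, h2⟩ := hσ
    have hex : ∃ r ∈ S, ¬ (r = σ r) := by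
      by_contra h
      push_neg at h
      have hfix : ∀ r, r ≠ i → r ≠ j → σ r = r := by
        intro r hri hrj
        exact (h r (by rw [hS]; simp [hri, hrj])).symm
      have himg : ∀ t, σ t ≠ t → σ t = i ∨ σ t = j := by
        intro t ht
        by_contra hc
        push_neg at hc
        have h1' : σ (σ t) = σ t := hfix (σ t) hc.1 hc.2
        exact ht (σ.injective h1')
      rcases eq_or_ne (σ i) i with hii | hii
      · have hjj : σ j = j := by
          rcases eq_or_ne (σ j) j with h' | h'
          · exact h'
          · rcases himg j h' with h'' | h''
            · exact absurd (σ.injective (h''.trans hii.symm)) hij.symm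
            · exact absurd h'' h'
        refine h1 (Equiv.ext fun r => ?_)
        rcases eq_or_ne r i with rfl | hri
        · simpa using hii
        rcases eq_or_ne r j with rfl | hrj
        · simpa using hjj
        · simpa using hfix r hri hrj
      · have hij' : σ i = j := by
          rcases himg i hii with h' | h'
          · exact absurd h' hii
          · exact h'
        have hji : σ j = i := by
          rcases eq_or_ne (σ j) j with h' | h'
          · exact absurd (σ.injective (hij'.trans h'.symm)) hij
          · rcases himg j h' with h'' | h''
            · exact h''
            · exact absurd h'' h'
        refine h2 (Equiv.ext fun r => ?_)
        rcases eq_or_ne r i with rfl | hri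
        · simp [Equiv.swap_apply_left, hij']
        rcases eq_or_ne r j with rfl | hrj
        · simp [Equiv.swap_apply_right, hji]
        · simp [Equiv.swap_apply_of_ne_of_ne hri hrj, hfix r hri hrj]
    obtain ⟨r, hr, hne⟩ := hex
    exact Finset.prod_eq_zero hr (by simp [hne])
  rw [← Finset.sum_subset (Finset.subset_univ ({1, Equiv.swap i j} : Finset (Equiv.Perm (Fin k))))
    (fun σ _ hσ => by rw [vanish σ hσ]; simp)]
  have hne1 : (1 : Equiv.Perm (Fin k)) ≠ Equiv.swap i j := by
    intro h
    have := congrFun (congrArg (fun e : Equiv.Perm (Fin k) => (e : Fin k → Fin k)) h) i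
    simp [Equiv.swap_apply_left] at this
    exact hij this
  rw [Finset.sum_pair hne1]
  have hSfix : ∀ r ∈ S, r ≠ i ∧ r ≠ j := by
    intro r hr
    rw [hS] at hr
    simp only [Finset.mem_erase] at hr
    exact ⟨hr.1, hr.2.1⟩
  have hprod1 : ∏ r ∈ S, (if r = (1 : Equiv.Perm (Fin k)) r then (-2:ℝ) else 0) = (-2:ℝ)^(k-2) := by
    have h1 : ∀ r ∈ S, (if r = (1 : Equiv.Perm (Fin k)) r then (-2:ℝ) else 0) = -2 :=
      fun r _ => by simp
    rw [Finset.prod_congr rfl h1, Finset.prod_const, hcardS]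
  have hprod2 : ∏ r ∈ S, (if r = Equiv.swap i j r then (-2:ℝ) else 0) = (-2:ℝ)^(k-2) := by
    have h1 : ∀ r ∈ S, (if r = Equiv.swap i j r then (-2:ℝ) else 0) = -2 := fun r hr => by
      simp [Equiv.swap_apply_of_ne_of_ne (hSfix r hr).1 (hSfix r hr).2]
    rw [Finset.prod_congr rfl h1, Finset.prod_const, hcardS]
  rw [hprod1, hprod2]
  simp only [Equiv.Perm.sign_one, Equiv.Perm.sign_swap hij, Equiv.Perm.one_apply,
    Equiv.swap_apply_left, Equiv.swap_apply_right, hMii, hMjj, hMsymm]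
  have hpk : (-2:ℝ)^k = (-2:ℝ)^(k-2) * 4 := by
    rw [show k = (k-2)+2 from (Nat.sub_add_cancel hk).symm]
    rw [pow_add]
    norm_num
  push_cast
  rw [hpk]
  simp only [one_smul, neg_smul]
  ring
end

section
/- If G is a finite simple connected graph whose matrix M_G = D_G + 2·Id is positive semidefinite, then the reflected polynomial q(z_1,...,z_k) := p_G(−z_1,...,−z_k)·(−1)^k has all coefficients nonnegative, where p_G(n) = det(Δ_n M_G − 2·Id_k). -/
open MvPolynomial

open Finset Equiv

lemma psd_det_nonneg {n : Type*} [Fintype n] [DecidableEq n] {A : Matrix n n ℝ}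
    (h : A.PosSemidef) : 0 ≤ A.det := by
  rw [h.isHermitian.det_eq_prod_eigenvalues]
  exact Finset.prod_nonneg fun i _ => h.eigenvalues_nonneg i

lemma fix_sum {k : ℕ} (t : Finset (Fin k)) (M : Matrix (Fin k) (Fin k) ℝ) :
    (∑ σ : Equiv.Perm (Fin k), if ∀ i, i ∉ t → σ i = i then
        ((Equiv.Perm.sign σ : ℤ) : ℝ) * ∏ i ∈ t, M (σ i) i else 0)
      = (M.submatrix ((↑) : t → Fin k) ((↑) : t → Fin k)).det := by
  rw [Matrix.det_apply', ← Finset.sum_filter]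
  have hmem : ∀ σ : Equiv.Perm (Fin k), (∀ i, i ∉ t → σ i = i) →
      ∀ x, x ∈ t ↔ σ x ∈ t := by
    intro σ hσ x
    constructor
    · intro hx
      by_contra h
      have h2 := hσ _ h
      have h3 := σ.injective h2
      rw [← h3] at hx
      exact h hx
    · intro hx
      by_contra h
      rw [hσ x h] at hx
      exact h hx
  refine Finset.sum_bij' (fun σ hσ => σ.subtypePerm
      (fun x => (hmem σ (by simpa using hσ) x).symm))
    (fun τ _ => Equiv.Perm.ofSubtype τ) (fun _ _ => Finset.mem_univ _)
    (fun τ _ => ?_) (fun σ hσ => ?_) (fun τ _ => ?_) (fun σ hσ => ?_)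
  · simp only [Finset.mem_filter, Finset.mem_univ, true_and]
    exact fun i hi => Equiv.Perm.ofSubtype_apply_of_not_mem τ hi
  · have hσ' : ∀ i, i ∉ t → σ i = i := by simpa using hσ
    exact Equiv.Perm.ofSubtype_subtypePerm _
      (fun x hx => Classical.byContradiction fun hc => hx (hσ' x hc))
  · exact Equiv.Perm.subtypePerm_ofSubtype τ
  · have hσ' : ∀ i, i ∉ t → σ i = i := by simpa using hσ
    have hsign : Equiv.Perm.sign (σ.subtypePerm (fun x => (hmem σ hσ' x).symm)) = Equiv.Perm.sign σ := by
      convert Equiv.Perm.sign_subtypePerm σ (fun x => (hmem σ hσ' x).symm)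
        (fun x hx => Classical.byContradiction fun hc => hx (hσ' x hc)) using 2
      congr!
    beta_reduce
    rw [hsign]
    congr 1
    rw [← Finset.prod_coe_sort t (fun i => M (σ i) i)]
    rfl

lemma det_expand {k : ℕ} (M : Matrix (Fin k) (Fin k) ℝ) :
    (Matrix.of fun i j : Fin k => X i * C (M i j) +
        if i = j then (C 2 : MvPolynomial (Fin k) ℝ) else 0).det
      = ∑ t : Finset (Fin k), C ((2:ℝ) ^ (k - t.card) *
          (M.submatrix ((↑) : t → Fin k) ((↑) : t → Fin k)).det) * ∏ i ∈ t, X i := by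
  rw [Matrix.det_apply']
  have hterm : ∀ σ : Equiv.Perm (Fin k),
      (∏ i, (Matrix.of fun i j : Fin k => X i * C (M i j) +
        if i = j then (C 2 : MvPolynomial (Fin k) ℝ) else 0) (σ i) i)
      = ∑ t ∈ (Finset.univ : Finset (Fin k)).powerset,
          (∏ i ∈ t, X (σ i) * C (M (σ i) i)) *
          ∏ i ∈ Finset.univ \ t, (if σ i = i then (C 2 : MvPolynomial (Fin k) ℝ) else 0) := by
    intro σ
    rw [← Finset.prod_add]
    rfl
  simp only [hterm, Finset.mul_sum]
  rw [Finset.sum_comm]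
  rw [Finset.powerset_univ]
  refine Finset.sum_congr rfl fun t _ => ?_
  have key : ∀ σ : Equiv.Perm (Fin k),
      (((Equiv.Perm.sign σ : ℤ)) : MvPolynomial (Fin k) ℝ) *
        ((∏ i ∈ t, X (σ i) * C (M (σ i) i)) *
          ∏ i ∈ Finset.univ \ t, (if σ i = i then (C 2 : MvPolynomial (Fin k) ℝ) else 0))
      = (if ∀ i, i ∉ t → σ i = i then
          C (((Equiv.Perm.sign σ : ℤ) : ℝ) * ∏ i ∈ t, M (σ i) i) else 0) *
        (C ((2:ℝ) ^ (k - t.card)) * ∏ i ∈ t, X i) := by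
    intro σ
    by_cases hP : ∀ i, i ∉ t → σ i = i
    · rw [if_pos hP]
      have h1 : (∏ i ∈ Finset.univ \ t, (if σ i = i then (C 2 : MvPolynomial (Fin k) ℝ) else 0))
          = C ((2:ℝ) ^ (k - t.card)) := by
        rw [Finset.prod_congr rfl (fun i hi => if_pos (hP i (Finset.mem_sdiff.mp hi).2)),
          Finset.prod_const, ← map_pow]
        congr 1
        rw [← Finset.compl_eq_univ_sdiff, Finset.card_compl, Fintype.card_fin]
      have h2 : (∏ i ∈ t, X (σ i) * (C (M (σ i) i) : MvPolynomial (Fin k) ℝ))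
          = (∏ i ∈ t, X i) * C (∏ i ∈ t, M (σ i) i) := by
        rw [Finset.prod_mul_distrib, map_prod]
        congr 1
        exact Equiv.Perm.prod_comp σ t X
          (fun a ha => Classical.byContradiction fun hc => ha (hP a hc))
      rw [h1, h2, map_mul, map_intCast]
      ring
    · rw [if_neg hP]
      push_neg at hP
      obtain ⟨i, hi, hne⟩ := hP
      have hz : (∏ i ∈ Finset.univ \ t,
          (if σ i = i then (C 2 : MvPolynomial (Fin k) ℝ) else 0)) = 0 :=
        Finset.prod_eq_zero (Finset.mem_sdiff.mpr ⟨Finset.mem_univ i, hi⟩) (if_neg hne)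
      rw [hz]
      ring
  simp only [key]
  rw [← Finset.sum_mul]
  have h3 : (∑ σ : Equiv.Perm (Fin k), (if ∀ i, i ∉ t → σ i = i then
      C (((Equiv.Perm.sign σ : ℤ) : ℝ) * ∏ i ∈ t, M (σ i) i) else
        (0 : MvPolynomial (Fin k) ℝ)))
      = C ((M.submatrix ((↑) : t → Fin k) ((↑) : t → Fin k)).det) := by
    rw [← fix_sum t M, map_sum]
    exact Finset.sum_congr rfl fun σ _ => by split <;> simp
  rw [h3, ← mul_assoc, ← map_mul, mul_comm ((M.submatrix _ _).det)]

lemma prod_X_monomial {k : ℕ} (t : Finset (Fin k)) :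
    ∃ d, (∏ i ∈ t, (X i : MvPolynomial (Fin k) ℝ)) = monomial d 1 := by
  classical
  induction t using Finset.induction with
  | empty => exact ⟨0, by simp⟩
  | @insert a s ha ih =>
    obtain ⟨d, hd⟩ := ih
    refine ⟨Finsupp.single a 1 + d, ?_⟩
    rw [Finset.prod_insert ha, hd, ← pow_one (X _ : MvPolynomial (Fin k) ℝ),
      X_pow_eq_monomial, monomial_mul, one_mul]

/-- if `M_G = D_G + 2·Id` is positive semidefinite, then the reflected
polynomial `(−1)^k · p_G(−z₁, …, −z_k)` has all coefficients nonnegative. -/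
theorem psd_gives_nonneg_reflected_coeffs (k : ℕ) (G : SimpleGraph (Fin k))
    [DecidableRel G.Adj] (hG : G.Connected)
    (M : Matrix (Fin k) (Fin k) ℝ)
    (hM : ∀ i j, M i j = (G.dist i j : ℝ) + if i = j then 2 else 0)
    (hpsd : M.PosSemidef)
    (p q : MvPolynomial (Fin k) ℝ)
    (hp : p = Matrix.det (Matrix.of fun i j : Fin k =>
      X i * C (M i j) - if i = j then (C 2 : MvPolynomial (Fin k) ℝ) else 0))
    (hq : q = (-1 : ℝ) ^ k • aeval (fun i => -(X i : MvPolynomial (Fin k) ℝ)) p) :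
    ∀ m : Fin k →₀ ℕ, 0 ≤ q.coeff m := by
  intro m
  set B : Matrix (Fin k) (Fin k) (MvPolynomial (Fin k) ℝ) :=
    Matrix.of fun i j : Fin k => X i * C (M i j) +
      if i = j then (C 2 : MvPolynomial (Fin k) ℝ) else 0 with hB
  set φ : MvPolynomial (Fin k) ℝ →ₐ[ℝ] MvPolynomial (Fin k) ℝ :=
    aeval (fun i => -(X i : MvPolynomial (Fin k) ℝ)) with hφ
  have hmap : (Matrix.of fun i j : Fin k =>
      X i * C (M i j) - if i = j then (C 2 : MvPolynomial (Fin k) ℝ) else 0).map φ = -B := by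
    ext i j
    simp only [Matrix.map_apply, Matrix.of_apply, Matrix.neg_apply, hB, map_sub, map_mul,
      hφ, aeval_X, apply_ite (aeval fun i => -(X i : MvPolynomial (Fin k) ℝ)), map_zero]
    rw [aeval_C, aeval_C, algebraMap_eq]
    split <;> ring
  have hqB : q = B.det := by
    rw [hq, hp, AlgHom.map_det, AlgHom.mapMatrix_apply, hmap, Matrix.det_neg,
      Fintype.card_fin, smul_eq_C_mul, map_pow, map_neg, map_one, ← mul_assoc,
      ← mul_pow, neg_mul_neg, one_mul, one_pow, one_mul]
  rw [hqB, hB, det_expand M, coeff_sum]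
  refine Finset.sum_nonneg fun t _ => ?_
  rw [coeff_C_mul]
  refine mul_nonneg (mul_nonneg (by positivity) ?_) ?_
  · exact psd_det_nonneg (hpsd.submatrix _)
  · obtain ⟨d, hd⟩ := prod_X_monomial t
    rw [hd, coeff_monomial]
    split <;> norm_num
end

section
/- For the complete bipartite graph K_{r,s} viewed as the blowup K_2[(r,s)] of an edge, the 2-variable blowup polynomial of K_2 is p_{K_2}(n_1, n_2) = det(diag(n_1,n_2)·M − 2·Id_2) with M = [[2,1],[1,2]], which equals 3 n_1 n_2 − 4 n_1 − 4 n_2 + 4; hence det(D_{K_{r,s}}) = (−2)^{r+s−2}·(3rs − 4r − 4s + 4). -/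
open MvPolynomial

/-- the blowup polynomial of the edge `K₂` (with `M = [[2,1],[1,2]]`) is
`3 n₁ n₂ − 4 n₁ − 4 n₂ + 4`; consequently for the complete bipartite graph `K_{r,s}`,
`det D_{K_{r,s}} = (−2)^(r+s−2) · (3rs − 4r − 4s + 4)`. -/
theorem blowup_poly_K2_and_det_complete_bipartite (r s : ℕ) (hr : 1 ≤ r) (hs : 1 ≤ s)
    (D : Matrix (Fin r ⊕ Fin s) (Fin r ⊕ Fin s) ℝ)
    (hD : ∀ a b, D a b =
      if a = b then 0 else
        match a, b with
        | Sum.inl _, Sum.inl _ => 2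
        | Sum.inr _, Sum.inr _ => 2
        | _, _ => 1) :
    Matrix.det (Matrix.of fun i j : Fin 2 =>
        X i * C (if i = j then (2 : ℝ) else 1) -
          if i = j then (C 2 : MvPolynomial (Fin 2) ℝ) else 0)
      = C 3 * X 0 * X 1 - C 4 * X 0 - C 4 * X 1 + C 4 ∧
    D.det = (-2 : ℝ) ^ (r + s - 2) *
      (3 * (r : ℝ) * s - 4 * r - 4 * s + 4) := by
  constructor
  · rw [Matrix.det_fin_two]
    simp only [Matrix.of_apply]
    norm_num [map_ofNat]
    ring
  · set U : Matrix (Fin r ⊕ Fin s) (Fin 2) ℝ :=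
      Matrix.of fun i => Sum.elim (fun _ : Fin r => ![(1:ℝ), 0]) (fun _ : Fin s => ![0, 1]) i
      with hU
    set M : Matrix (Fin 2) (Fin 2) ℝ := !![2,1;1,2] with hM
    have hUV : ∀ a b, (U * (M * U.transpose)) a b =
        match a, b with
        | Sum.inl _, Sum.inl _ => 2
        | Sum.inr _, Sum.inr _ => 2
        | _, _ => 1 := by
      intro a b
      rcases a with a | a <;> rcases b with b | b <;>
        simp [hU, hM, Matrix.mul_apply, Matrix.vecMul, dotProduct,
          Fin.sum_univ_two] <;> norm_num
    have hdecomp : D = (-2 : ℝ) • (1 + ((-(1/2) : ℝ) • U) * (M * U.transpose)) := by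
      ext i j
      have := hUV i j
      rw [hD]
      rcases i with i | i <;> rcases j with j | j
      · by_cases h : i = j <;>
          simp [Matrix.add_apply, Matrix.one_apply, Matrix.smul_mul, Matrix.smul_apply, this, h, hUV]
      · simp [Matrix.add_apply, Matrix.one_apply, Matrix.smul_mul, Matrix.smul_apply, this]
      · simp [Matrix.add_apply, Matrix.one_apply, Matrix.smul_mul, Matrix.smul_apply, this]
      · by_cases h : i = j <;>
          simp [Matrix.add_apply, Matrix.one_apply, Matrix.smul_mul, Matrix.smul_apply, this, h, hUV]
    rw [hdecomp, Matrix.det_smul, Matrix.det_one_add_mul_comm]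
    have hcard : Fintype.card (Fin r ⊕ Fin s) = r + s := by simp
    rw [hcard]
    have h2 : (1 + M * U.transpose * ((-(1/2) : ℝ) • U)).det
        = 1 - (r:ℝ) - s + 3/4 * r * s := by
      have hUtU : U.transpose * U = !![(r:ℝ), 0; 0, (s:ℝ)] := by
        ext j k
        fin_cases j <;> fin_cases k <;>
          simp [hU, Matrix.mul_apply, Fintype.sum_sum_type, Finset.sum_const, Finset.card_univ]
      have : M * U.transpose * ((-(1/2) : ℝ) • U) = (-(1/2) : ℝ) • (M * (U.transpose * U)) := by
        rw [Matrix.mul_smul, Matrix.mul_assoc]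
      rw [this, hUtU, Matrix.det_fin_two]
      simp [hM, Matrix.mul_apply, Fin.sum_univ_two, Matrix.add_apply, Matrix.one_apply,
        Matrix.smul_apply]
      ring
    rw [h2]
    obtain ⟨k, hk⟩ : ∃ k, r + s = k + 2 := ⟨r + s - 2, by omega⟩
    have hk2 : r + s - 2 = k := by omega
    rw [hk, Nat.add_sub_cancel, pow_add]
    ring
end
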